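/- arXiv:2502.14392 — 4 statements merged into one kernel-verified Lean document; each statement's English description precedes it below -/
import Mathlib

section
/- Let G be a (2,1)-tight multigraph with a vertex v₀ of degree 3 having three distinct neighbours v₁,v₂,v₃ (all different from v₀), and let G−v₀ be obtained from G by deleting v₀ with its incident edges. Then: (1) there is no (2,1)-tight subgraph of G−v₀ containing all of v₁, v₂ and v₃; (2) if v₁ and v₂ lie in a common (2,1)-tight subgraph of G−v₀, then neither the pair {v₁,v₃} nor the pair {v₂,v₃} lies in a common (2,1)-tight subgraph of G−v₀; (3) if v₁ and v₂ lie in a common (2,1)-tight subgraph of G−v₀, then neither the pair {v₁,v₃} nor the pair {v₂,v₃} lies in a common (2,2)-tight subgraph of G−v₀. -/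
namespace Crystal

/-- The wallpaper group `pm = ℤ² ⋊ 𝒞ₛ`.  An element is a pair of a translation
vector `t ∈ ℤ²` and a Boolean `r` recording the `𝒞ₛ`-component
(`true` = the reflection `s` in the x-axis). -/
@[ext] structure PM : Type where
  t : ℤ × ℤ
  r : Bool

namespace PM

/-- The action of the reflection component on translation vectors. -/
def act (σ : Bool) (z : ℤ × ℤ) : ℤ × ℤ := (z.1, if σ then -z.2 else z.2)

instance : Mul PM := ⟨fun a b => ⟨a.t + act a.r b.t, xor a.r b.r⟩⟩
instance : One PM := ⟨⟨0, false⟩⟩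
instance : Inv PM := ⟨fun a => ⟨act a.r (-a.t), a.r⟩⟩

lemma mul_def (a b : PM) : a * b = ⟨a.t + act a.r b.t, xor a.r b.r⟩ := rfl
lemma one_def : (1 : PM) = ⟨0, false⟩ := rfl
lemma inv_def (a : PM) : a⁻¹ = ⟨act a.r (-a.t), a.r⟩ := rfl

instance : Group PM where
  mul_assoc a b c := by
    obtain ⟨⟨x1, x2⟩, ra⟩ := a
    obtain ⟨⟨y1, y2⟩, rb⟩ := b
    obtain ⟨⟨z1, z2⟩, rc⟩ := c
    cases ra <;> cases rb <;> cases rc <;>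
      simp [mul_def, act, Prod.ext_iff] <;> omega
  one_mul a := by
    obtain ⟨⟨x1, x2⟩, ra⟩ := a
    cases ra <;> simp [mul_def, one_def, act]
  mul_one a := by
    obtain ⟨⟨x1, x2⟩, ra⟩ := a
    cases ra <;> simp [mul_def, one_def, act]
  inv_mul_cancel a := by
    obtain ⟨⟨x1, x2⟩, ra⟩ := a
    cases ra <;> simp [mul_def, one_def, inv_def, act, Prod.ext_iff]

/-- The affine action of `pm` on the plane: `(z,σ)·x = σ(x) + z`. -/
noncomputable def toPlane (g : PM) (x : ℝ × ℝ) : ℝ × ℝ :=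
  (x.1 + (g.t.1 : ℝ), (if g.r then -x.2 else x.2) + (g.t.2 : ℝ))

end PM

/-- A multigraph: a finite vertex set, a finite edge set, and two endpoint maps
(which also fix a reference orientation of every edge, from `fst` to `snd`).
Loops and parallel edges are allowed. -/
structure Multigraph (α β : Type) where
  verts : Finset α
  edges : Finset β
  fst : β → α
  snd : β → α
  fst_mem : ∀ e ∈ edges, fst e ∈ verts
  snd_mem : ∀ e ∈ edges, snd e ∈ verts

variable {α β : Type}

/-- `H` is a subgraph of `G`. -/
def IsSubgraph (H G : Multigraph α β) : Prop :=
  H.verts ⊆ G.verts ∧ H.edges ⊆ G.edges ∧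
    ∀ e ∈ H.edges, H.fst e = G.fst e ∧ H.snd e = G.snd e

/-- `(k,l)`-sparsity. -/
def Sparse (k l : ℕ) (G : Multigraph α β) : Prop :=
  ∀ H : Multigraph α β, IsSubgraph H G → 1 ≤ H.edges.card →
    (H.edges.card : ℤ) ≤ k * H.verts.card - l

/-- `(k,l)`-tightness. -/
def Tight (k l : ℕ) (G : Multigraph α β) : Prop :=
  Sparse k l G ∧ (G.edges.card : ℤ) = k * G.verts.card - l

/-- The degree of a vertex: the number of edge-incidences, loops counting twice. -/
def Multigraph.degree [DecidableEq α] (G : Multigraph α β) (v : α) : ℕ :=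
  ∑ e ∈ G.edges, ((if G.fst e = v then 1 else 0) + (if G.snd e = v then 1 else 0))

/-- The starting vertex of a step `(e, dir)` of a walk: `dir = true` means the
edge is traversed forwards. -/
def stepHead (G : Multigraph α β) (s : β × Bool) : α := if s.2 then G.fst s.1 else G.snd s.1

/-- The final vertex of a step of a walk. -/
def stepTail (G : Multigraph α β) (s : β × Bool) : α := if s.2 then G.snd s.1 else G.fst s.1

/-- `IsWalk G u v L` : `L` is a walk in `G` from `u` to `v`. -/
def IsWalk (G : Multigraph α β) : α → α → List (β × Bool) → Prop
  | u, v, [] => u = v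
  | u, v, s :: L => s.1 ∈ G.edges ∧ stepHead G s = u ∧ IsWalk G (stepTail G s) v L

/-- The net gain of a walk. -/
def walkGain (m : β → PM) (L : List (β × Bool)) : PM :=
  (L.map fun s => if s.2 then m s.1 else (m s.1)⁻¹).prod

/-- A gain graph is balanced if every closed walk has identity net gain. -/
def Balanced (G : Multigraph α β) (m : β → PM) : Prop :=
  ∀ u L, IsWalk G u u L → walkGain m L = 1

/-- A gain graph is purely periodic if every closed walk has net gain in the
translation subgroup `ℤ²`. -/
def PurelyPeriodic (G : Multigraph α β) (m : β → PM) : Prop :=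
  ∀ u L, IsWalk G u u L → (walkGain m L).r = false

/-- A multigraph is connected if every pair of its vertices is joined by a walk. -/
def Connected (G : Multigraph α β) : Prop :=
  ∀ u ∈ G.verts, ∀ v ∈ G.verts, ∃ L, IsWalk G u v L

/-- The conditions for `m` to be a gain assignment on `G`: parallel edges with the
same orientation get distinct gains, and loops get non-identity gains. -/
structure IsGainGraph (G : Multigraph α β) (m : β → PM) : Prop where
  parallel_ne : ∀ e ∈ G.edges, ∀ f ∈ G.edges,
    e ≠ f → G.fst e = G.fst f → G.snd e = G.snd f → m e ≠ m f
  loop_ne_one : ∀ e ∈ G.edges, G.fst e = G.snd e → m e ≠ 1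

/-- `ℤ²⋊𝒞ₛ`-tightness of a gain graph. -/
def PMTight (G : Multigraph α β) (m : β → PM) : Prop :=
  Tight 2 1 G ∧
    (∀ H : Multigraph α β, IsSubgraph H G → PurelyPeriodic H m → Sparse 2 2 H) ∧
    (∀ H : Multigraph α β, IsSubgraph H G → Balanced H m → Sparse 2 3 H)

/-- The orbit rigidity matrix of a `ℤ²⋊𝒞ₛ`-gain framework. -/
noncomputable def orbitMatrix [DecidableEq α] (G : Multigraph α β) (m : β → PM)
    (p : α → ℝ × ℝ) :
    Matrix {e : β // e ∈ G.edges} ({v : α // v ∈ G.verts} × Fin 2) ℝ :=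
  fun er vc =>
    let e : β := er.1
    let i : α := G.fst e
    let j : α := G.snd e
    let w : α := vc.1.1
    let entry : ℝ × ℝ :=
      if i = j then
        (if w = i then p i + p i - PM.toPlane (m e) (p i) - PM.toPlane (m e)⁻¹ (p i) else 0)
      else if w = i then p i - PM.toPlane (m e) (p j)
      else if w = j then p j - PM.toPlane (m e)⁻¹ (p i)
      else 0
    if vc.2 = 0 then entry.1 else entry.2

/-- A configuration is generic if its orbit rigidity matrix has the maximum
possible rank among all configurations. -/
def Generic [DecidableEq α] (G : Multigraph α β) (m : β → PM) (p : α → ℝ × ℝ) : Prop :=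
  ∀ q : α → ℝ × ℝ, (orbitMatrix G m q).rank ≤ (orbitMatrix G m p).rank

/-- A gain graph is rigid if the orbit rigidity matrix of a generic configuration
has rank `2|V| - 1`. -/
def Rigid [DecidableEq α] (G : Multigraph α β) (m : β → PM) : Prop :=
  ∃ p : α → ℝ × ℝ, Generic G m p ∧
    ((orbitMatrix G m p).rank : ℤ) = 2 * G.verts.card - 1

/-- A gain graph is independent if the rows of the orbit rigidity matrix of a
generic configuration are linearly independent. -/
def Independent [DecidableEq α] (G : Multigraph α β) (m : β → PM) : Prop :=
  ∃ p : α → ℝ × ℝ, Generic G m p ∧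
    LinearIndependent ℝ (fun er => orbitMatrix G m p er)

/-- A gain graph is minimally rigid if it is rigid and independent. -/
def MinimallyRigid [DecidableEq α] (G : Multigraph α β) (m : β → PM) : Prop :=
  Rigid G m ∧ Independent G m

/-- `e` joins `u` and `v` (in one of the two orientations). -/
def Joins (G : Multigraph α β) (e : β) (u v : α) : Prop :=
  (G.fst e = u ∧ G.snd e = v) ∨ (G.fst e = v ∧ G.snd e = u)

/-- The gain of an edge read with `v` as its initial vertex (inverting the gain
if the edge is oriented towards `v`). -/
def gainFrom [DecidableEq α] (G : Multigraph α β) (m : β → PM) (v : α) (e : β) : PM :=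
  if G.fst e = v then m e else (m e)⁻¹

/-- The endpoint of an edge other than `v` (for an edge incident with `v`). -/
def otherEnd [DecidableEq α] (G : Multigraph α β) (v : α) (e : β) : α :=
  if G.fst e = v then G.snd e else G.fst e

/-- Deletion of a vertex together with all edges incident with it. -/
def Multigraph.deleteVertex [DecidableEq α] (G : Multigraph α β) (v : α) :
    Multigraph α β where
  verts := G.verts.erase v
  edges := G.edges.filter fun e => G.fst e ≠ v ∧ G.snd e ≠ v
  fst := G.fst
  snd := G.snd
  fst_mem := fun e he => by
    rw [Finset.mem_filter] at he
    exact Finset.mem_erase.2 ⟨he.2.1, G.fst_mem e he.1⟩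
  snd_mem := fun e he => by
    rw [Finset.mem_filter] at he
    exact Finset.mem_erase.2 ⟨he.2.2, G.snd_mem e he.1⟩

/-- Addition of a new edge `f` from `u` to `v`. -/
def Multigraph.addEdge [DecidableEq α] [DecidableEq β] (G : Multigraph α β)
    (f : β) (u v : α) : Multigraph α β where
  verts := insert u (insert v G.verts)
  edges := insert f G.edges
  fst := Function.update G.fst f u
  snd := Function.update G.snd f v
  fst_mem := fun e he => by
    by_cases hef : e = f
    · subst hef; simp
    · rw [Function.update_of_ne hef]
      have heG : e ∈ G.edges := by
        rcases Finset.mem_insert.1 he with h | h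
        · exact absurd h hef
        · exact h
      exact Finset.mem_insert_of_mem (Finset.mem_insert_of_mem (G.fst_mem e heG))
  snd_mem := fun e he => by
    by_cases hef : e = f
    · subst hef; simp
    · rw [Function.update_of_ne hef]
      have heG : e ∈ G.edges := by
        rcases Finset.mem_insert.1 he with h | h
        · exact absurd h hef
        · exact h
      exact Finset.mem_insert_of_mem (Finset.mem_insert_of_mem (G.snd_mem e heG))

/-- `(G',m')` is obtained from `(G,m)` by a gained 0-extension. -/
def IsZeroExtension [DecidableEq α] [DecidableEq β] (G : Multigraph α β) (m : β → PM)
    (G' : Multigraph α β) (m' : β → PM) : Prop :=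
  ∃ v₀ v₁ v₂ f₁ f₂, v₀ ∉ G.verts ∧ v₁ ∈ G.verts ∧ v₂ ∈ G.verts ∧
    f₁ ∉ G.edges ∧ f₂ ∉ G.edges ∧ f₁ ≠ f₂ ∧
    G'.verts = insert v₀ G.verts ∧ G'.edges = insert f₁ (insert f₂ G.edges) ∧
    (∀ e ∈ G.edges, G'.fst e = G.fst e ∧ G'.snd e = G.snd e ∧ m' e = m e) ∧
    Joins G' f₁ v₀ v₁ ∧ Joins G' f₂ v₀ v₂ ∧
    IsGainGraph G' m'

/-- `(G',m')` is obtained from `(G,m)` by a gained 1-extension. -/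
def IsOneExtension [DecidableEq α] [DecidableEq β] (G : Multigraph α β) (m : β → PM)
    (G' : Multigraph α β) (m' : β → PM) : Prop :=
  ∃ v₀ v₃ e f₁ f₂ f₃, v₀ ∉ G.verts ∧ v₃ ∈ G.verts ∧ e ∈ G.edges ∧
    f₁ ∉ G.edges.erase e ∧ f₂ ∉ G.edges.erase e ∧ f₃ ∉ G.edges.erase e ∧
    f₁ ≠ f₂ ∧ f₁ ≠ f₃ ∧ f₂ ≠ f₃ ∧
    G'.verts = insert v₀ G.verts ∧
    G'.edges = insert f₁ (insert f₂ (insert f₃ (G.edges.erase e))) ∧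
    (∀ e' ∈ G.edges.erase e, G'.fst e' = G.fst e' ∧ G'.snd e' = G.snd e' ∧ m' e' = m e') ∧
    Joins G' f₁ v₀ (G.fst e) ∧ Joins G' f₂ v₀ (G.snd e) ∧ Joins G' f₃ v₀ v₃ ∧
    (gainFrom G' m' v₀ f₁)⁻¹ * gainFrom G' m' v₀ f₂ = m e ∧
    IsGainGraph G' m'

/-- `(G',m')` is obtained from `(G,m)` by a gained loop-1-extension. -/
def IsLoopOneExtension [DecidableEq α] [DecidableEq β] (G : Multigraph α β) (m : β → PM)
    (G' : Multigraph α β) (m' : β → PM) : Prop :=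
  ∃ v₀ v₁ l f, v₀ ∉ G.verts ∧ v₁ ∈ G.verts ∧ l ∉ G.edges ∧ f ∉ G.edges ∧ l ≠ f ∧
    G'.verts = insert v₀ G.verts ∧ G'.edges = insert l (insert f G.edges) ∧
    (∀ e ∈ G.edges, G'.fst e = G.fst e ∧ G'.snd e = G.snd e ∧ m' e = m e) ∧
    G'.fst l = v₀ ∧ G'.snd l = v₀ ∧ (m' l).r = true ∧
    Joins G' f v₀ v₁ ∧ IsGainGraph G' m'

/-- A `ℤ²⋊𝒞ₛ`-tight gain graph on `K₁¹`: a single vertex with a single loop whose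
gain has non-trivial `𝒞ₛ`-component. -/
def IsTightK11 (G : Multigraph α β) (m : β → PM) : Prop :=
  ∃ v l, G.verts = {v} ∧ G.edges = {l} ∧ G.fst l = v ∧ G.snd l = v ∧ (m l).r = true


lemma isSubgraph_trans {H K G : Multigraph α β} (h1 : IsSubgraph H K)
    (h2 : IsSubgraph K G) : IsSubgraph H G :=
  ⟨h1.1.trans h2.1, h1.2.1.trans h2.2.1, fun e he => by
    obtain ⟨a, b⟩ := h1.2.2 e he
    obtain ⟨c, d⟩ := h2.2.2 e (h1.2.1 he)
    exact ⟨a.trans c, b.trans d⟩⟩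

lemma deleteVertex_isSubgraph [DecidableEq α] (G : Multigraph α β) (v : α) :
    IsSubgraph (G.deleteVertex v) G :=
  ⟨Finset.erase_subset _ _, Finset.filter_subset _ _, fun _ _ => ⟨rfl, rfl⟩⟩

/-- Part 1: no `(2,1)`-tight subgraph of `G - v₀` contains all three neighbours. -/
lemma no_tight_all {α β : Type} [DecidableEq α]
    (G : Multigraph α β) (hG : Tight 2 1 G)
    (v₀ v₁ v₂ v₃ : α)
    (e₁ e₂ e₃ : β) (he12 : e₁ ≠ e₂) (he13 : e₁ ≠ e₃) (he23 : e₂ ≠ e₃)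
    (hm₁ : e₁ ∈ G.edges) (hm₂ : e₂ ∈ G.edges) (hm₃ : e₃ ∈ G.edges)
    (hi₁ : G.fst e₁ = v₀ ∨ G.snd e₁ = v₀) (ho₁ : otherEnd G v₀ e₁ = v₁)
    (hi₂ : G.fst e₂ = v₀ ∨ G.snd e₂ = v₀) (ho₂ : otherEnd G v₀ e₂ = v₂)
    (hi₃ : G.fst e₃ = v₀ ∨ G.snd e₃ = v₀) (ho₃ : otherEnd G v₀ e₃ = v₃) :
    ¬ ∃ H : Multigraph α β, IsSubgraph H (G.deleteVertex v₀) ∧ Tight 2 1 H ∧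
        v₁ ∈ H.verts ∧ v₂ ∈ H.verts ∧ v₃ ∈ H.verts := by
  classical
  rintro ⟨H, hsub, ⟨hsp, hcard⟩, hv1, hv2, hv3⟩
  -- the edges at v₀ are not in the deleted graph
  have hnotD : ∀ e : β, (G.fst e = v₀ ∨ G.snd e = v₀) → e ∉ H.edges := by
    intro e he hmem
    have := hsub.2.1 hmem
    simp only [Multigraph.deleteVertex, Finset.mem_filter] at this
    rcases he with h | h
    · exact this.2.1 h
    · exact this.2.2 h
  have hend : ∀ (e : β) (v : α), (G.fst e = v₀ ∨ G.snd e = v₀) → otherEnd G v₀ e = v →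
      v ∈ H.verts → (G.fst e ∈ insert v₀ H.verts ∧ G.snd e ∈ insert v₀ H.verts) := by
    intro e v hi ho hv
    unfold otherEnd at ho
    by_cases h : G.fst e = v₀
    · constructor
      · rw [h]; exact Finset.mem_insert_self _ _
      · rw [if_pos h] at ho; rw [ho]; exact Finset.mem_insert_of_mem hv
    · rw [if_neg h] at ho
      rcases hi with h' | h'
      · exact absurd h' h
      · exact ⟨by rw [ho]; exact Finset.mem_insert_of_mem hv,
          by rw [h']; exact Finset.mem_insert_self _ _⟩
  -- the extended subgraph
  set H' : Multigraph α β :=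
    { verts := insert v₀ H.verts
      edges := insert e₁ (insert e₂ (insert e₃ H.edges))
      fst := G.fst
      snd := G.snd
      fst_mem := by
        intro e he
        simp only [Finset.mem_insert] at he
        rcases he with rfl | rfl | rfl | he
        · exact (hend _ v₁ hi₁ ho₁ hv1).1
        · exact (hend _ v₂ hi₂ ho₂ hv2).1
        · exact (hend _ v₃ hi₃ ho₃ hv3).1
        · have h1 := (hsub.2.2 e he).1
          have := H.fst_mem e he
          rw [h1] at this
          simp only [Multigraph.deleteVertex] at this
          exact Finset.mem_insert_of_mem this
      snd_mem := by
        intro e he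
        simp only [Finset.mem_insert] at he
        rcases he with rfl | rfl | rfl | he
        · exact (hend _ v₁ hi₁ ho₁ hv1).2
        · exact (hend _ v₂ hi₂ ho₂ hv2).2
        · exact (hend _ v₃ hi₃ ho₃ hv3).2
        · have h1 := (hsub.2.2 e he).2
          have := H.snd_mem e he
          rw [h1] at this
          simp only [Multigraph.deleteVertex] at this
          exact Finset.mem_insert_of_mem this } with hH'
  have hHsubG : IsSubgraph H G :=
    isSubgraph_trans hsub (deleteVertex_isSubgraph G v₀)
  have hH'sub : IsSubgraph H' G := by
    refine ⟨?_, ?_, fun e _ => ⟨rfl, rfl⟩⟩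
    · intro x hx
      rcases Finset.mem_insert.1 hx with rfl | hx
      · rcases hi₁ with h | h
        · rw [← h]; exact G.fst_mem e₁ hm₁
        · rw [← h]; exact G.snd_mem e₁ hm₁
      · exact hHsubG.1 hx
    · intro e he
      simp only [hH', Finset.mem_insert] at he
      rcases he with rfl | rfl | rfl | he
      · exact hm₁
      · exact hm₂
      · exact hm₃
      · exact hHsubG.2.1 he
  -- cardinalities
  have hv0 : v₀ ∉ H.verts := by
    intro h
    have := hsub.1 h
    simp only [Multigraph.deleteVertex, Finset.mem_erase] at this
    exact this.1 rfl
  have hVcard : H'.verts.card = H.verts.card + 1 := Finset.card_insert_of_notMem hv0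
  have hne3 : e₃ ∉ H.edges := hnotD e₃ hi₃
  have hne2 : e₂ ∉ insert e₃ H.edges := by
    simp only [Finset.mem_insert]
    push_neg
    exact ⟨he23, hnotD e₂ hi₂⟩
  have hne1 : e₁ ∉ insert e₂ (insert e₃ H.edges) := by
    simp only [Finset.mem_insert]
    push_neg
    exact ⟨he12, he13, hnotD e₁ hi₁⟩
  have hEcard : H'.edges.card = H.edges.card + 3 := by
    show (insert e₁ (insert e₂ (insert e₃ H.edges))).card = _
    rw [Finset.card_insert_of_notMem hne1, Finset.card_insert_of_notMem hne2,
      Finset.card_insert_of_notMem hne3]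
  have hE1 : 1 ≤ H'.edges.card := by omega
  have := hG.1 H' hH'sub hE1
  rw [hVcard, hEcard] at this
  -- H.verts nonempty
  omega

/-- Union of a `(2,1)`-tight and a `(2,l)`-tight subgraph sharing a vertex is
`(2,1)`-tight. -/
lemma tight_union {α β : Type} [DecidableEq α]
    (G : Multigraph α β) (hG : Tight 2 1 G)
    (l : ℕ) (hl : l = 1 ∨ l = 2)
    (v₀ : α)
    (H₁ H₂ : Multigraph α β)
    (hs1 : IsSubgraph H₁ (G.deleteVertex v₀)) (hs2 : IsSubgraph H₂ (G.deleteVertex v₀))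
    (ht1 : Tight 2 1 H₁) (ht2 : Tight 2 l H₂)
    (w : α) (hw1 : w ∈ H₁.verts) (hw2 : w ∈ H₂.verts) :
    ∃ U : Multigraph α β, IsSubgraph U (G.deleteVertex v₀) ∧ Tight 2 1 U ∧
      H₁.verts ⊆ U.verts ∧ H₂.verts ⊆ U.verts := by
  classical
  set D := G.deleteVertex v₀ with hD
  have hDG : IsSubgraph D G := deleteVertex_isSubgraph G v₀
  have hfst1 : ∀ e ∈ H₁.edges, H₁.fst e = G.fst e ∧ H₁.snd e = G.snd e := fun e he =>
    (isSubgraph_trans hs1 hDG).2.2 e he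
  have hfst2 : ∀ e ∈ H₂.edges, H₂.fst e = G.fst e ∧ H₂.snd e = G.snd e := fun e he =>
    (isSubgraph_trans hs2 hDG).2.2 e he
  set U : Multigraph α β :=
    { verts := H₁.verts ∪ H₂.verts
      edges := H₁.edges ∪ H₂.edges
      fst := G.fst
      snd := G.snd
      fst_mem := by
        intro e he
        rcases Finset.mem_union.1 he with h | h
        · exact Finset.mem_union_left _ (by rw [← (hfst1 e h).1]; exact H₁.fst_mem e h)
        · exact Finset.mem_union_right _ (by rw [← (hfst2 e h).1]; exact H₂.fst_mem e h)
      snd_mem := by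
        intro e he
        rcases Finset.mem_union.1 he with h | h
        · exact Finset.mem_union_left _ (by rw [← (hfst1 e h).2]; exact H₁.snd_mem e h)
        · exact Finset.mem_union_right _ (by rw [← (hfst2 e h).2]; exact H₂.snd_mem e h) }
    with hU
  have hUD : IsSubgraph U D := by
    refine ⟨Finset.union_subset hs1.1 hs2.1, Finset.union_subset hs1.2.1 hs2.2.1, ?_⟩
    intro e he
    have heD : e ∈ D.edges := (Finset.union_subset hs1.2.1 hs2.2.1) he
    exact ⟨(hDG.2.2 e heD).1.symm, (hDG.2.2 e heD).2.symm⟩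
  have hUG : IsSubgraph U G := isSubgraph_trans hUD hDG
  -- the intersection subgraph
  set I : Multigraph α β :=
    { verts := H₁.verts ∩ H₂.verts
      edges := H₁.edges ∩ H₂.edges
      fst := G.fst
      snd := G.snd
      fst_mem := by
        intro e he
        rcases Finset.mem_inter.1 he with ⟨h1, h2⟩
        exact Finset.mem_inter.2
          ⟨by rw [← (hfst1 e h1).1]; exact H₁.fst_mem e h1,
           by rw [← (hfst2 e h2).1]; exact H₂.fst_mem e h2⟩
      snd_mem := by
        intro e he
        rcases Finset.mem_inter.1 he with ⟨h1, h2⟩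
        exact Finset.mem_inter.2
          ⟨by rw [← (hfst1 e h1).2]; exact H₁.snd_mem e h1,
           by rw [← (hfst2 e h2).2]; exact H₂.snd_mem e h2⟩ } with hI
  have hIsub : IsSubgraph I H₂ := by
    refine ⟨Finset.inter_subset_right, Finset.inter_subset_right, ?_⟩
    intro e he
    rcases Finset.mem_inter.1 he with ⟨_, h2⟩
    exact ⟨(hfst2 e h2).1.symm, (hfst2 e h2).2.symm⟩
  have hwI : w ∈ I.verts := Finset.mem_inter.2 ⟨hw1, hw2⟩
  have hIVpos : 1 ≤ I.verts.card := Finset.card_pos.2 ⟨w, hwI⟩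
  have hIbound : (I.edges.card : ℤ) ≤ 2 * I.verts.card - l := by
    by_cases h : 1 ≤ I.edges.card
    · exact ht2.1 I hIsub h
    · have : I.edges.card = 0 := by omega
      rw [this]
      have h1 : (1:ℤ) ≤ ((H₁.verts ∩ H₂.verts).card : ℤ) := by exact_mod_cast hIVpos
      rcases hl with rfl | rfl <;> push_cast <;> omega
  have hVcard := Finset.card_union_add_card_inter H₁.verts H₂.verts
  have hEcard := Finset.card_union_add_card_inter H₁.edges H₂.edges
  have hc1 := ht1.2
  have hc2 := ht2.2
  have hV1pos : 1 ≤ H₁.verts.card := Finset.card_pos.2 ⟨w, hw1⟩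
  have hE1pos : 1 ≤ H₁.edges.card := by
    rcases hl with _ | _ <;> omega
  have hEUpos : 1 ≤ U.edges.card := by
    have : H₁.edges ⊆ U.edges := Finset.subset_union_left
    have := Finset.card_le_card this
    omega
  have hUbound := hG.1 U hUG hEUpos
  have hUtight : (U.edges.card : ℤ) = 2 * U.verts.card - 1 := by
    have hUE : U.edges.card = (H₁.edges ∪ H₂.edges).card := rfl
    have hUV : U.verts.card = (H₁.verts ∪ H₂.verts).card := rfl
    have hIE : I.edges.card = (H₁.edges ∩ H₂.edges).card := rfl
    have hIV : I.verts.card = (H₁.verts ∩ H₂.verts).card := rfl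
    rw [hUE, hUV] at hUbound ⊢
    rw [hIE, hIV] at hIbound
    rcases hl with rfl | rfl <;> push_cast at * <;> omega
  exact ⟨U, hUD, ⟨fun K hK hKe => hG.1 K (isSubgraph_trans hK hUG) hKe, hUtight⟩,
    Finset.subset_union_left, Finset.subset_union_right⟩

/-- Tight subgraphs of `G - v₀` avoiding `v₀` cannot contain too
many neighbours of a degree-3 vertex `v₀` with three distinct neighbours. -/
theorem subgraphs_lemma {α β : Type} [DecidableEq α]
    (G : Multigraph α β) (hG : Tight 2 1 G)
    (v₀ v₁ v₂ v₃ : α) (h01 : v₁ ≠ v₀) (h02 : v₂ ≠ v₀) (h03 : v₃ ≠ v₀)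
    (h12 : v₁ ≠ v₂) (h13 : v₁ ≠ v₃) (h23 : v₂ ≠ v₃)
    (hv₀ : v₀ ∈ G.verts) (hdeg : G.degree v₀ = 3)
    (e₁ e₂ e₃ : β) (he12 : e₁ ≠ e₂) (he13 : e₁ ≠ e₃) (he23 : e₂ ≠ e₃)
    (hm₁ : e₁ ∈ G.edges) (hm₂ : e₂ ∈ G.edges) (hm₃ : e₃ ∈ G.edges)
    (hi₁ : G.fst e₁ = v₀ ∨ G.snd e₁ = v₀) (ho₁ : otherEnd G v₀ e₁ = v₁)
    (hi₂ : G.fst e₂ = v₀ ∨ G.snd e₂ = v₀) (ho₂ : otherEnd G v₀ e₂ = v₂)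
    (hi₃ : G.fst e₃ = v₀ ∨ G.snd e₃ = v₀) (ho₃ : otherEnd G v₀ e₃ = v₃) :
    (¬ ∃ H : Multigraph α β, IsSubgraph H (G.deleteVertex v₀) ∧ Tight 2 1 H ∧
        v₁ ∈ H.verts ∧ v₂ ∈ H.verts ∧ v₃ ∈ H.verts) ∧
    ((∃ H : Multigraph α β, IsSubgraph H (G.deleteVertex v₀) ∧ Tight 2 1 H ∧
        v₁ ∈ H.verts ∧ v₂ ∈ H.verts) →
      (¬ ∃ H : Multigraph α β, IsSubgraph H (G.deleteVertex v₀) ∧ Tight 2 1 H ∧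
          v₁ ∈ H.verts ∧ v₃ ∈ H.verts) ∧
      (¬ ∃ H : Multigraph α β, IsSubgraph H (G.deleteVertex v₀) ∧ Tight 2 1 H ∧
          v₂ ∈ H.verts ∧ v₃ ∈ H.verts)) ∧
    ((∃ H : Multigraph α β, IsSubgraph H (G.deleteVertex v₀) ∧ Tight 2 1 H ∧
        v₁ ∈ H.verts ∧ v₂ ∈ H.verts) →
      (¬ ∃ H : Multigraph α β, IsSubgraph H (G.deleteVertex v₀) ∧ Tight 2 2 H ∧
          v₁ ∈ H.verts ∧ v₃ ∈ H.verts) ∧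
      (¬ ∃ H : Multigraph α β, IsSubgraph H (G.deleteVertex v₀) ∧ Tight 2 2 H ∧
          v₂ ∈ H.verts ∧ v₃ ∈ H.verts)) := by
  have part1 := no_tight_all G hG v₀ v₁ v₂ v₃ e₁ e₂ e₃ he12 he13 he23
    hm₁ hm₂ hm₃ hi₁ ho₁ hi₂ ho₂ hi₃ ho₃
  refine ⟨part1, ?_, ?_⟩
  · rintro ⟨H12, hs12, ht12, h1m, h2m⟩
    constructor
    · rintro ⟨H13, hs13, ht13, hv1, hv3⟩
      obtain ⟨U, hUD, hUt, hsub1, hsub2⟩ := tight_union G hG 1 (Or.inl rfl) v₀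
        H12 H13 hs12 hs13 ht12 ht13 v₁ h1m hv1
      exact part1 ⟨U, hUD, hUt, hsub1 h1m, hsub1 h2m, hsub2 hv3⟩
    · rintro ⟨H23, hs23, ht23, hv2, hv3⟩
      obtain ⟨U, hUD, hUt, hsub1, hsub2⟩ := tight_union G hG 1 (Or.inl rfl) v₀
        H12 H23 hs12 hs23 ht12 ht23 v₂ h2m hv2
      exact part1 ⟨U, hUD, hUt, hsub1 h1m, hsub1 h2m, hsub2 hv3⟩
  · rintro ⟨H12, hs12, ht12, h1m, h2m⟩
    constructor
    · rintro ⟨H13, hs13, ht13, hv1, hv3⟩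
      obtain ⟨U, hUD, hUt, hsub1, hsub2⟩ := tight_union G hG 2 (Or.inr rfl) v₀
        H12 H13 hs12 hs13 ht12 ht13 v₁ h1m hv1
      exact part1 ⟨U, hUD, hUt, hsub1 h1m, hsub1 h2m, hsub2 hv3⟩
    · rintro ⟨H23, hs23, ht23, hv2, hv3⟩
      obtain ⟨U, hUD, hUt, hsub1, hsub2⟩ := tight_union G hG 2 (Or.inr rfl) v₀
        H12 H23 hs12 hs23 ht12 ht23 v₂ h2m hv2
      exact part1 ⟨U, hUD, hUt, hsub1 h1m, hsub1 h2m, hsub2 hv3⟩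

end Crystal
end

section
/- Let G be a (2,1)-tight multigraph with a vertex v₀ of degree 3 having three distinct neighbours v₁,v₂,v₃ (all different from v₀). Let G₁₂=(V₁₂,E₁₂) be a (2,3)-tight subgraph of G with v₁,v₂∈V₁₂ and v₀∉V₁₂, and let G₂₃=(V₂₃,E₂₃) be a (2,3)-tight subgraph of G with v₂,v₃∈V₂₃ and v₀∉V₂₃. Then exactly one of the following holds: (1) |V₁₂∩V₂₃|>1, |E₁₂∪E₂₃|=2|V₁₂∪V₂₃|−3 and |E₁₂∩E₂₃|=2|V₁₂∩V₂₃|−3; (2) |V₁₂∩V₂₃|>1, |E₁₂∪E₂₃|=2|V₁₂∪V₂₃|−2 and |E₁₂∩E₂₃|=2|V₁₂∩V₂₃|−4; (3) |V₁₂∩V₂₃|=1 and |E₁₂∪E₂₃|=2|V₁₂∪V₂₃|−4. -/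
namespace Crystal

variable {α β : Type}

set_option maxHeartbeats 2000000 in
/-- The possible union/intersection counts for two `(2,3)`-tight
blockers at a degree-3 vertex with three distinct neighbours: exactly one of the
three listed cases holds. -/
theorem tight23_pair_counts {α β : Type} [DecidableEq α] [DecidableEq β]
    (G : Multigraph α β) (hG : Tight 2 1 G)
    (v₀ v₁ v₂ v₃ : α) (h01 : v₁ ≠ v₀) (h02 : v₂ ≠ v₀) (h03 : v₃ ≠ v₀)
    (h12 : v₁ ≠ v₂) (h13 : v₁ ≠ v₃) (h23 : v₂ ≠ v₃)
    (hv₀ : v₀ ∈ G.verts) (hdeg : G.degree v₀ = 3)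
    (e₁ e₂ e₃ : β) (he12 : e₁ ≠ e₂) (he13 : e₁ ≠ e₃) (he23 : e₂ ≠ e₃)
    (hm₁ : e₁ ∈ G.edges) (hm₂ : e₂ ∈ G.edges) (hm₃ : e₃ ∈ G.edges)
    (hi₁ : G.fst e₁ = v₀ ∨ G.snd e₁ = v₀) (ho₁ : otherEnd G v₀ e₁ = v₁)
    (hi₂ : G.fst e₂ = v₀ ∨ G.snd e₂ = v₀) (ho₂ : otherEnd G v₀ e₂ = v₂)
    (hi₃ : G.fst e₃ = v₀ ∨ G.snd e₃ = v₀) (ho₃ : otherEnd G v₀ e₃ = v₃)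
    (G₁₂ G₂₃ : Multigraph α β)
    (hsub₁₂ : IsSubgraph G₁₂ G) (ht₁₂ : Tight 2 3 G₁₂)
    (hv₁₁₂ : v₁ ∈ G₁₂.verts) (hv₂₁₂ : v₂ ∈ G₁₂.verts) (hv₀₁₂ : v₀ ∉ G₁₂.verts)
    (hsub₂₃ : IsSubgraph G₂₃ G) (ht₂₃ : Tight 2 3 G₂₃)
    (hv₂₂₃ : v₂ ∈ G₂₃.verts) (hv₃₂₃ : v₃ ∈ G₂₃.verts) (hv₀₂₃ : v₀ ∉ G₂₃.verts) :
    ((1 < (G₁₂.verts ∩ G₂₃.verts).card ∧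
        ((G₁₂.edges ∪ G₂₃.edges).card : ℤ) = 2 * (G₁₂.verts ∪ G₂₃.verts).card - 3 ∧
        ((G₁₂.edges ∩ G₂₃.edges).card : ℤ) = 2 * (G₁₂.verts ∩ G₂₃.verts).card - 3) ∨
      (1 < (G₁₂.verts ∩ G₂₃.verts).card ∧
        ((G₁₂.edges ∪ G₂₃.edges).card : ℤ) = 2 * (G₁₂.verts ∪ G₂₃.verts).card - 2 ∧
        ((G₁₂.edges ∩ G₂₃.edges).card : ℤ) = 2 * (G₁₂.verts ∩ G₂₃.verts).card - 4) ∨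
      ((G₁₂.verts ∩ G₂₃.verts).card = 1 ∧
        ((G₁₂.edges ∪ G₂₃.edges).card : ℤ) = 2 * (G₁₂.verts ∪ G₂₃.verts).card - 4)) ∧
    ¬ ((1 < (G₁₂.verts ∩ G₂₃.verts).card ∧
        ((G₁₂.edges ∪ G₂₃.edges).card : ℤ) = 2 * (G₁₂.verts ∪ G₂₃.verts).card - 3 ∧
        ((G₁₂.edges ∩ G₂₃.edges).card : ℤ) = 2 * (G₁₂.verts ∩ G₂₃.verts).card - 3) ∧
      (1 < (G₁₂.verts ∩ G₂₃.verts).card ∧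
        ((G₁₂.edges ∪ G₂₃.edges).card : ℤ) = 2 * (G₁₂.verts ∪ G₂₃.verts).card - 2 ∧
        ((G₁₂.edges ∩ G₂₃.edges).card : ℤ) = 2 * (G₁₂.verts ∩ G₂₃.verts).card - 4)) ∧
    ¬ ((1 < (G₁₂.verts ∩ G₂₃.verts).card ∧
        ((G₁₂.edges ∪ G₂₃.edges).card : ℤ) = 2 * (G₁₂.verts ∪ G₂₃.verts).card - 3 ∧
        ((G₁₂.edges ∩ G₂₃.edges).card : ℤ) = 2 * (G₁₂.verts ∩ G₂₃.verts).card - 3) ∧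
      ((G₁₂.verts ∩ G₂₃.verts).card = 1 ∧
        ((G₁₂.edges ∪ G₂₃.edges).card : ℤ) = 2 * (G₁₂.verts ∪ G₂₃.verts).card - 4)) ∧
    ¬ ((1 < (G₁₂.verts ∩ G₂₃.verts).card ∧
        ((G₁₂.edges ∪ G₂₃.edges).card : ℤ) = 2 * (G₁₂.verts ∪ G₂₃.verts).card - 2 ∧
        ((G₁₂.edges ∩ G₂₃.edges).card : ℤ) = 2 * (G₁₂.verts ∩ G₂₃.verts).card - 4) ∧
      ((G₁₂.verts ∩ G₂₃.verts).card = 1 ∧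
        ((G₁₂.edges ∪ G₂₃.edges).card : ℤ) = 2 * (G₁₂.verts ∪ G₂₃.verts).card - 4)) := by
  obtain ⟨hGsp, -⟩ := hG
  obtain ⟨hV12, hE12, hf12⟩ := hsub₁₂
  obtain ⟨hV23, hE23, hf23⟩ := hsub₂₃
  obtain ⟨hsp12, hc12⟩ := ht₁₂
  obtain ⟨hsp23, hc23⟩ := ht₂₃
  -- edges at v₀ are not in the subgraphs
  have hnotin : ∀ e : β, (G.fst e = v₀ ∨ G.snd e = v₀) → e ∉ G₁₂.edges ∧ e ∉ G₂₃.edges := by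
    intro e he
    constructor
    · intro hmem
      rcases he with h | h
      · have := G₁₂.fst_mem e hmem; rw [(hf12 e hmem).1, h] at this; exact hv₀₁₂ this
      · have := G₁₂.snd_mem e hmem; rw [(hf12 e hmem).2, h] at this; exact hv₀₁₂ this
    · intro hmem
      rcases he with h | h
      · have := G₂₃.fst_mem e hmem; rw [(hf23 e hmem).1, h] at this; exact hv₀₂₃ this
      · have := G₂₃.snd_mem e hmem; rw [(hf23 e hmem).2, h] at this; exact hv₀₂₃ this
  have hUf : ∀ e ∈ G₁₂.edges ∪ G₂₃.edges, G.fst e ∈ G₁₂.verts ∪ G₂₃.verts := by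
    intro e he
    rcases Finset.mem_union.1 he with h | h
    · exact Finset.mem_union_left _ (by rw [← (hf12 e h).1]; exact G₁₂.fst_mem e h)
    · exact Finset.mem_union_right _ (by rw [← (hf23 e h).1]; exact G₂₃.fst_mem e h)
  have hUs : ∀ e ∈ G₁₂.edges ∪ G₂₃.edges, G.snd e ∈ G₁₂.verts ∪ G₂₃.verts := by
    intro e he
    rcases Finset.mem_union.1 he with h | h
    · exact Finset.mem_union_left _ (by rw [← (hf12 e h).2]; exact G₁₂.snd_mem e h)
    · exact Finset.mem_union_right _ (by rw [← (hf23 e h).2]; exact G₂₃.snd_mem e h)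
  have hendp : ∀ e w, (G.fst e = v₀ ∨ G.snd e = v₀) → otherEnd G v₀ e = w →
      (G.fst e = v₀ ∨ G.fst e = w) ∧ (G.snd e = v₀ ∨ G.snd e = w) := by
    intro e w hi ho
    unfold otherEnd at ho
    by_cases h : G.fst e = v₀
    · simp only [h, if_true] at ho; exact ⟨Or.inl h, Or.inr ho⟩
    · simp only [h, if_false] at ho
      rcases hi with h' | h'
      · exact absurd h' h
      · exact ⟨Or.inr ho, Or.inl h'⟩
  have hv1U : v₁ ∈ G₁₂.verts ∪ G₂₃.verts := Finset.mem_union_left _ hv₁₁₂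
  have hv2U : v₂ ∈ G₁₂.verts ∪ G₂₃.verts := Finset.mem_union_left _ hv₂₁₂
  have hv3U : v₃ ∈ G₁₂.verts ∪ G₂₃.verts := Finset.mem_union_right _ hv₃₂₃
  have hHf : ∀ e ∈ insert e₁ (insert e₂ (insert e₃ (G₁₂.edges ∪ G₂₃.edges))),
      G.fst e ∈ insert v₀ (G₁₂.verts ∪ G₂₃.verts) := by
    intro e he
    simp only [Finset.mem_insert] at he ⊢
    rcases he with rfl | rfl | rfl | h
    · rcases (hendp e v₁ hi₁ ho₁).1 with h | h
      · exact Or.inl h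
      · exact Or.inr (h ▸ hv1U)
    · rcases (hendp e v₂ hi₂ ho₂).1 with h | h
      · exact Or.inl h
      · exact Or.inr (h ▸ hv2U)
    · rcases (hendp e v₃ hi₃ ho₃).1 with h | h
      · exact Or.inl h
      · exact Or.inr (h ▸ hv3U)
    · exact Or.inr (hUf e h)
  have hHs : ∀ e ∈ insert e₁ (insert e₂ (insert e₃ (G₁₂.edges ∪ G₂₃.edges))),
      G.snd e ∈ insert v₀ (G₁₂.verts ∪ G₂₃.verts) := by
    intro e he
    simp only [Finset.mem_insert] at he ⊢
    rcases he with rfl | rfl | rfl | h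
    · rcases (hendp e v₁ hi₁ ho₁).2 with h | h
      · exact Or.inl h
      · exact Or.inr (h ▸ hv1U)
    · rcases (hendp e v₂ hi₂ ho₂).2 with h | h
      · exact Or.inl h
      · exact Or.inr (h ▸ hv2U)
    · rcases (hendp e v₃ hi₃ ho₃).2 with h | h
      · exact Or.inl h
      · exact Or.inr (h ▸ hv3U)
    · exact Or.inr (hUs e h)
  -- apply (2,1)-sparsity of G to the graph H = union + v₀ + e₁,e₂,e₃
  have he1n := hnotin e₁ hi₁
  have he2n := hnotin e₂ hi₂
  have he3n := hnotin e₃ hi₃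
  have he1U : e₁ ∉ G₁₂.edges ∪ G₂₃.edges := by
    simp only [Finset.mem_union]; tauto
  have he2U : e₂ ∉ G₁₂.edges ∪ G₂₃.edges := by
    simp only [Finset.mem_union]; tauto
  have he3U : e₃ ∉ G₁₂.edges ∪ G₂₃.edges := by
    simp only [Finset.mem_union]; tauto
  have hv0U : v₀ ∉ G₁₂.verts ∪ G₂₃.verts := by
    simp only [Finset.mem_union]; tauto
  have hHsparse : ((insert e₁ (insert e₂ (insert e₃ (G₁₂.edges ∪ G₂₃.edges)))).card : ℤ)
      ≤ 2 * ((insert v₀ (G₁₂.verts ∪ G₂₃.verts)).card : ℤ) - 1 := by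
    have := hGsp ⟨insert v₀ (G₁₂.verts ∪ G₂₃.verts),
        insert e₁ (insert e₂ (insert e₃ (G₁₂.edges ∪ G₂₃.edges))), G.fst, G.snd, hHf, hHs⟩
      ⟨Finset.insert_subset hv₀ (Finset.union_subset hV12 hV23),
        Finset.insert_subset hm₁ (Finset.insert_subset hm₂
          (Finset.insert_subset hm₃ (Finset.union_subset hE12 hE23))),
        fun e _ => ⟨rfl, rfl⟩⟩
      (Finset.card_pos.2 ⟨e₁, Finset.mem_insert_self _ _⟩)
    exact_mod_cast this
  have hUcard : (insert e₁ (insert e₂ (insert e₃ (G₁₂.edges ∪ G₂₃.edges)))).card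
      = (G₁₂.edges ∪ G₂₃.edges).card + 3 := by
    rw [Finset.card_insert_of_notMem (by simp only [Finset.mem_insert]; tauto),
      Finset.card_insert_of_notMem (by simp only [Finset.mem_insert]; tauto),
      Finset.card_insert_of_notMem he3U]
  have hVcard : (insert v₀ (G₁₂.verts ∪ G₂₃.verts)).card
      = (G₁₂.verts ∪ G₂₃.verts).card + 1 :=
    Finset.card_insert_of_notMem hv0U
  rw [hUcard, hVcard] at hHsparse
  -- the intersection graph
  have hIf : ∀ e ∈ G₁₂.edges ∩ G₂₃.edges, G.fst e ∈ G₁₂.verts ∩ G₂₃.verts := by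
    intro e he
    rcases Finset.mem_inter.1 he with ⟨h1, h2⟩
    exact Finset.mem_inter.2 ⟨by rw [← (hf12 e h1).1]; exact G₁₂.fst_mem e h1,
      by rw [← (hf23 e h2).1]; exact G₂₃.fst_mem e h2⟩
  have hIs : ∀ e ∈ G₁₂.edges ∩ G₂₃.edges, G.snd e ∈ G₁₂.verts ∩ G₂₃.verts := by
    intro e he
    rcases Finset.mem_inter.1 he with ⟨h1, h2⟩
    exact Finset.mem_inter.2 ⟨by rw [← (hf12 e h1).2]; exact G₁₂.snd_mem e h1,
      by rw [← (hf23 e h2).2]; exact G₂₃.snd_mem e h2⟩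
  have hIbound : (G₁₂.edges ∩ G₂₃.edges).card = 0 ∨
      ((G₁₂.edges ∩ G₂₃.edges).card : ℤ) ≤ 2 * ((G₁₂.verts ∩ G₂₃.verts).card : ℤ) - 3 := by
    rcases Nat.eq_zero_or_pos (G₁₂.edges ∩ G₂₃.edges).card with h | h
    · exact Or.inl h
    · refine Or.inr ?_
      have := hsp12 ⟨G₁₂.verts ∩ G₂₃.verts, G₁₂.edges ∩ G₂₃.edges, G.fst, G.snd, hIf, hIs⟩
        ⟨Finset.inter_subset_left, Finset.inter_subset_left,
          fun e he => ⟨((hf12 e (Finset.mem_inter.1 he).1).1).symm,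
            ((hf12 e (Finset.mem_inter.1 he).1).2).symm⟩⟩ h
      exact_mod_cast this
  have hsumV : (G₁₂.verts ∪ G₂₃.verts).card + (G₁₂.verts ∩ G₂₃.verts).card
      = G₁₂.verts.card + G₂₃.verts.card := Finset.card_union_add_card_inter _ _
  have hsumE : (G₁₂.edges ∪ G₂₃.edges).card + (G₁₂.edges ∩ G₂₃.edges).card
      = G₁₂.edges.card + G₂₃.edges.card := Finset.card_union_add_card_inter _ _
  have hI1 : 1 ≤ (G₁₂.verts ∩ G₂₃.verts).card :=
    Finset.card_pos.2 ⟨v₂, Finset.mem_inter.2 ⟨hv₂₁₂, hv₂₂₃⟩⟩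
  have hc12' : (G₁₂.edges.card : ℤ) = 2 * (G₁₂.verts.card : ℤ) - 3 := by exact_mod_cast hc12
  have hc23' : (G₂₃.edges.card : ℤ) = 2 * (G₂₃.verts.card : ℤ) - 3 := by exact_mod_cast hc23
  rcases hIbound with h | h <;> omega

end Crystal
end

section
/- Let G be a (2,1)-tight multigraph with a vertex v₀ of degree 3 having three distinct neighbours v₁,v₂,v₃ (all different from v₀). Let G₁₂=(V₁₂,E₁₂) be a subgraph of G with |E₁₂|=2|V₁₂|−2, v₁,v₂∈V₁₂ and v₀∉V₁₂, and let G₂₃=(V₂₃,E₂₃) be a (2,2)-tight subgraph of G with v₂,v₃∈V₂₃ and v₀∉V₂₃. Then |E₁₂∪E₂₃|=2|V₁₂∪V₂₃|−2 and |E₁₂∩E₂₃|=2|V₁₂∩V₂₃|−2. -/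
namespace Crystal

variable {α β : Type}

/-- Union/intersection counts for a `(2,2)`-count subgraph and a
`(2,2)`-tight subgraph at a degree-3 vertex with three distinct neighbours. -/
theorem count22_tight22_counts {α β : Type} [DecidableEq α] [DecidableEq β]
    (G : Multigraph α β) (hG : Tight 2 1 G)
    (v₀ v₁ v₂ v₃ : α) (h01 : v₁ ≠ v₀) (h02 : v₂ ≠ v₀) (h03 : v₃ ≠ v₀)
    (h12 : v₁ ≠ v₂) (h13 : v₁ ≠ v₃) (h23 : v₂ ≠ v₃)
    (hv₀ : v₀ ∈ G.verts) (hdeg : G.degree v₀ = 3)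
    (e₁ e₂ e₃ : β) (he12 : e₁ ≠ e₂) (he13 : e₁ ≠ e₃) (he23 : e₂ ≠ e₃)
    (hm₁ : e₁ ∈ G.edges) (hm₂ : e₂ ∈ G.edges) (hm₃ : e₃ ∈ G.edges)
    (hi₁ : G.fst e₁ = v₀ ∨ G.snd e₁ = v₀) (ho₁ : otherEnd G v₀ e₁ = v₁)
    (hi₂ : G.fst e₂ = v₀ ∨ G.snd e₂ = v₀) (ho₂ : otherEnd G v₀ e₂ = v₂)
    (hi₃ : G.fst e₃ = v₀ ∨ G.snd e₃ = v₀) (ho₃ : otherEnd G v₀ e₃ = v₃)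
    (G₁₂ G₂₃ : Multigraph α β)
    (hsub₁₂ : IsSubgraph G₁₂ G)
    (hc₁₂ : (G₁₂.edges.card : ℤ) = 2 * G₁₂.verts.card - 2)
    (hv₁₁₂ : v₁ ∈ G₁₂.verts) (hv₂₁₂ : v₂ ∈ G₁₂.verts) (hv₀₁₂ : v₀ ∉ G₁₂.verts)
    (hsub₂₃ : IsSubgraph G₂₃ G) (ht₂₃ : Tight 2 2 G₂₃)
    (hv₂₂₃ : v₂ ∈ G₂₃.verts) (hv₃₂₃ : v₃ ∈ G₂₃.verts) (hv₀₂₃ : v₀ ∉ G₂₃.verts) :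
    ((G₁₂.edges ∪ G₂₃.edges).card : ℤ) = 2 * (G₁₂.verts ∪ G₂₃.verts).card - 2 ∧
    ((G₁₂.edges ∩ G₂₃.edges).card : ℤ) = 2 * (G₁₂.verts ∩ G₂₃.verts).card - 2 := by
  obtain ⟨hGsp, -⟩ := hG
  obtain ⟨h23sp, h23c⟩ := ht₂₃
  obtain ⟨hV12, hE12, hends12⟩ := hsub₁₂
  obtain ⟨hV23, hE23, hends23⟩ := hsub₂₃
  -- endpoints of the three edges at v₀
  have ends : ∀ e w, (G.fst e = v₀ ∨ G.snd e = v₀) → otherEnd G v₀ e = w → w ≠ v₀ →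
      (G.fst e = v₀ ∧ G.snd e = w) ∨ (G.fst e = w ∧ G.snd e = v₀) := by
    intro e w hi ho hw
    unfold otherEnd at ho
    by_cases h : G.fst e = v₀
    · left; rw [if_pos h] at ho; exact ⟨h, ho⟩
    · right; rw [if_neg h] at ho
      rcases hi with h' | h'
      · exact absurd h' h
      · exact ⟨ho, h'⟩
  have hend₁ := ends e₁ v₁ hi₁ ho₁ h01
  have hend₂ := ends e₂ v₂ hi₂ ho₂ h02
  have hend₃ := ends e₃ v₃ hi₃ ho₃ h03
  -- the three edges are not in G₁₂ or G₂₃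
  have hnot12 : ∀ e, (G.fst e = v₀ ∨ G.snd e = v₀) → e ∉ G₁₂.edges := by
    intro e hi he
    rcases hi with h | h
    · have := G₁₂.fst_mem e he
      rw [(hends12 e he).1, h] at this
      exact hv₀₁₂ this
    · have := G₁₂.snd_mem e he
      rw [(hends12 e he).2, h] at this
      exact hv₀₁₂ this
  have hnot23 : ∀ e, (G.fst e = v₀ ∨ G.snd e = v₀) → e ∉ G₂₃.edges := by
    intro e hi he
    rcases hi with h | h
    · have := G₂₃.fst_mem e he
      rw [(hends23 e he).1, h] at this
      exact hv₀₂₃ this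
    · have := G₂₃.snd_mem e he
      rw [(hends23 e he).2, h] at this
      exact hv₀₂₃ this
  set Vu := G₁₂.verts ∪ G₂₃.verts with hVu
  set Eu := G₁₂.edges ∪ G₂₃.edges with hEu
  have memVu : ∀ e ∈ Eu, G.fst e ∈ Vu ∧ G.snd e ∈ Vu := by
    intro e he
    rcases Finset.mem_union.1 he with h | h
    · exact ⟨Finset.mem_union_left _ ((hends12 e h).1 ▸ G₁₂.fst_mem e h),
        Finset.mem_union_left _ ((hends12 e h).2 ▸ G₁₂.snd_mem e h)⟩
    · exact ⟨Finset.mem_union_right _ ((hends23 e h).1 ▸ G₂₃.fst_mem e h),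
        Finset.mem_union_right _ ((hends23 e h).2 ▸ G₂₃.snd_mem e h)⟩
  have hv₁u : v₁ ∈ Vu := Finset.mem_union_left _ hv₁₁₂
  have hv₂u : v₂ ∈ Vu := Finset.mem_union_left _ hv₂₁₂
  have hv₃u : v₃ ∈ Vu := Finset.mem_union_right _ hv₃₂₃
  have hmemI : ∀ e w, (G.fst e = v₀ ∧ G.snd e = w) ∨ (G.fst e = w ∧ G.snd e = v₀) →
      w ∈ Vu → G.fst e ∈ insert v₀ Vu ∧ G.snd e ∈ insert v₀ Vu := by
    intro e w h hw
    rcases h with ⟨h1, h2⟩ | ⟨h1, h2⟩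
    · exact ⟨h1 ▸ Finset.mem_insert_self _ _, h2 ▸ Finset.mem_insert_of_mem hw⟩
    · exact ⟨h1 ▸ Finset.mem_insert_of_mem hw, h2 ▸ Finset.mem_insert_self _ _⟩
  have endmem : ∀ e ∈ insert e₁ (insert e₂ (insert e₃ Eu)),
      G.fst e ∈ insert v₀ Vu ∧ G.snd e ∈ insert v₀ Vu := by
    intro e he
    rcases Finset.mem_insert.1 he with rfl | he
    · exact hmemI e v₁ hend₁ hv₁u
    rcases Finset.mem_insert.1 he with rfl | he
    · exact hmemI e v₂ hend₂ hv₂u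
    rcases Finset.mem_insert.1 he with rfl | he
    · exact hmemI e v₃ hend₃ hv₃u
    · exact ⟨Finset.mem_insert_of_mem (memVu e he).1,
        Finset.mem_insert_of_mem (memVu e he).2⟩
  -- the union graph together with v₀ and its three edges
  let Hu : Multigraph α β :=
    { verts := insert v₀ Vu
      edges := insert e₁ (insert e₂ (insert e₃ Eu))
      fst := G.fst
      snd := G.snd
      fst_mem := fun e he => (endmem e he).1
      snd_mem := fun e he => (endmem e he).2 }
  have hsubHu : IsSubgraph Hu G := by
    refine ⟨?_, ?_, fun e _ => ⟨rfl, rfl⟩⟩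
    · intro x hx
      rcases Finset.mem_insert.1 hx with rfl | hx
      · exact hv₀
      rcases Finset.mem_union.1 hx with h | h
      · exact hV12 h
      · exact hV23 h
    · intro e he
      rcases Finset.mem_insert.1 he with rfl | he
      · exact hm₁
      rcases Finset.mem_insert.1 he with rfl | he
      · exact hm₂
      rcases Finset.mem_insert.1 he with rfl | he
      · exact hm₃
      rcases Finset.mem_union.1 he with h | h
      · exact hE12 h
      · exact hE23 h
  have hspu := hGsp Hu hsubHu (Finset.one_le_card.2 ⟨e₁, Finset.mem_insert_self _ _⟩)
  -- cardinalities of Hu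
  have hv₀u : v₀ ∉ Vu := by
    intro h
    rcases Finset.mem_union.1 h with h | h
    · exact hv₀₁₂ h
    · exact hv₀₂₃ h
  have hcardVHu : Hu.verts.card = Vu.card + 1 := Finset.card_insert_of_notMem hv₀u
  have he₃u : e₃ ∉ Eu := by
    intro h
    rcases Finset.mem_union.1 h with h | h
    · exact hnot12 e₃ hi₃ h
    · exact hnot23 e₃ hi₃ h
  have he₂u : e₂ ∉ insert e₃ Eu := by
    intro h
    rcases Finset.mem_insert.1 h with h | h
    · exact he23 h
    rcases Finset.mem_union.1 h with h | h
    · exact hnot12 e₂ hi₂ h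
    · exact hnot23 e₂ hi₂ h
  have he₁u : e₁ ∉ insert e₂ (insert e₃ Eu) := by
    intro h
    rcases Finset.mem_insert.1 h with h | h
    · exact he12 h
    rcases Finset.mem_insert.1 h with h | h
    · exact he13 h
    rcases Finset.mem_union.1 h with h | h
    · exact hnot12 e₁ hi₁ h
    · exact hnot23 e₁ hi₁ h
  have hcardEHu : Hu.edges.card = Eu.card + 3 := by
    show (insert e₁ (insert e₂ (insert e₃ Eu))).card = Eu.card + 3
    rw [Finset.card_insert_of_notMem he₁u, Finset.card_insert_of_notMem he₂u,
      Finset.card_insert_of_notMem he₃u]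
  have hEuBound : (Eu.card : ℤ) ≤ 2 * Vu.card - 2 := by
    rw [hcardEHu, hcardVHu] at hspu
    push_cast at hspu ⊢
    omega
  -- the intersection
  set Vi := G₁₂.verts ∩ G₂₃.verts with hVi
  set Ei := G₁₂.edges ∩ G₂₃.edges with hEi
  have hViPos : 1 ≤ Vi.card :=
    Finset.one_le_card.2 ⟨v₂, Finset.mem_inter.2 ⟨hv₂₁₂, hv₂₂₃⟩⟩
  have hEiBound : (Ei.card : ℤ) ≤ 2 * Vi.card - 2 := by
    rcases Nat.eq_zero_or_pos Ei.card with h0 | hpos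
    · rw [h0]
      push_cast
      omega
    · let Hi : Multigraph α β :=
        { verts := Vi
          edges := Ei
          fst := G.fst
          snd := G.snd
          fst_mem := fun e he => by
            have h1 := (Finset.mem_inter.1 he).1
            have h2 := (Finset.mem_inter.1 he).2
            exact Finset.mem_inter.2 ⟨(hends12 e h1).1 ▸ G₁₂.fst_mem e h1,
              (hends23 e h2).1 ▸ G₂₃.fst_mem e h2⟩
          snd_mem := fun e he => by
            have h1 := (Finset.mem_inter.1 he).1
            have h2 := (Finset.mem_inter.1 he).2
            exact Finset.mem_inter.2 ⟨(hends12 e h1).2 ▸ G₁₂.snd_mem e h1,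
              (hends23 e h2).2 ▸ G₂₃.snd_mem e h2⟩ }
      have hsubHi : IsSubgraph Hi G₂₃ := by
        refine ⟨fun x hx => (Finset.mem_inter.1 hx).2,
          fun e he => (Finset.mem_inter.1 he).2, fun e he => ?_⟩
        have h2 := (Finset.mem_inter.1 he).2
        exact ⟨((hends23 e h2).1).symm, ((hends23 e h2).2).symm⟩
      have := h23sp Hi hsubHi hpos
      push_cast at this ⊢
      exact this
  -- inclusion-exclusion and arithmetic
  have hVie : Vu.card + Vi.card = G₁₂.verts.card + G₂₃.verts.card :=
    Finset.card_union_add_card_inter _ _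
  have hEie : Eu.card + Ei.card = G₁₂.edges.card + G₂₃.edges.card :=
    Finset.card_union_add_card_inter _ _
  push_cast at h23c
  constructor
  · show (Eu.card : ℤ) = 2 * Vu.card - 2
    omega
  · show (Ei.card : ℤ) = 2 * Vi.card - 2
    omega

end Crystal
end

section
/- Let (G,m) be a ℤ²⋊Cs-gain graph with purely periodic subgraphs G_A and G_B. If G_A∩G_B is connected (in particular nonempty), then G_A∪G_B is purely periodic. -/
namespace Crystal

variable {α β : Type}

section WalkAux

variable {α β : Type}

lemma walkGain_cons (m : β → PM) (s : β × Bool) (L : List (β × Bool)) :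
    walkGain m (s :: L) = (if s.2 then m s.1 else (m s.1)⁻¹) * walkGain m L := by
  simp [walkGain]

lemma walkGain_append (m : β → PM) (L₁ L₂ : List (β × Bool)) :
    walkGain m (L₁ ++ L₂) = walkGain m L₁ * walkGain m L₂ := by
  simp [walkGain]

lemma r_mul (a b : PM) : (a * b).r = xor a.r b.r := rfl
lemma r_inv (a : PM) : (a⁻¹).r = a.r := rfl
lemma r_one : (1 : PM).r = false := rfl

/-- Reversing a step of a walk. -/
def flipStep (s : β × Bool) : β × Bool := (s.1, !s.2)

lemma isWalk_append {G : Multigraph α β} {u v w : α} {L₁ L₂ : List (β × Bool)}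
    (h1 : IsWalk G u v L₁) (h2 : IsWalk G v w L₂) : IsWalk G u w (L₁ ++ L₂) := by
  induction L₁ generalizing u with
  | nil => have h : u = v := h1; subst h; exact h2
  | cons s L ih => exact ⟨h1.1, h1.2.1, ih h1.2.2⟩

lemma isWalk_reverse {G : Multigraph α β} {u v : α} {L : List (β × Bool)}
    (h : IsWalk G u v L) : IsWalk G v u (L.reverse.map flipStep) := by
  induction L generalizing u with
  | nil => have h' : u = v := h; subst h'; exact rfl
  | cons s L ih =>
    obtain ⟨he, hh, ht⟩ := h
    have h1 : IsWalk G (stepTail G s) u [flipStep s] := by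
      refine ⟨he, ?_, ?_⟩
      · show stepHead G (flipStep s) = stepTail G s
        obtain ⟨e, d⟩ := s
        cases d <;> rfl
      · show stepTail G (flipStep s) = u
        rw [← hh]
        obtain ⟨e, d⟩ := s
        cases d <;> rfl
    rw [List.reverse_cons, List.map_append]
    exact isWalk_append (ih ht) h1

lemma stepGain_r (m : β → PM) (e : β) (d : Bool) :
    (if d then m e else (m e)⁻¹).r = (m e).r := by
  cases d <;> simp [r_inv]

lemma walkGain_r_reverse (m : β → PM) (L : List (β × Bool)) :
    (walkGain m (L.reverse.map flipStep)).r = (walkGain m L).r := by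
  induction L with
  | nil => rfl
  | cons s L ih =>
    rw [List.reverse_cons, List.map_append, walkGain_append, walkGain_cons, r_mul, r_mul]
    have h1 : (walkGain m (List.map flipStep [s])).r = (m s.1).r := by
      obtain ⟨e, d⟩ := s
      cases d <;> simp [walkGain, flipStep, r_inv]
    rw [h1, ih, stepGain_r, Bool.xor_comm]

lemma xor_aux1 (a b c : Bool) : xor (xor a b) (xor b c) = xor a c := by
  cases a <;> cases b <;> cases c <;> rfl
lemma xor_aux2 (a b c : Bool) : xor (xor a b) (xor a c) = xor b c := by
  cases a <;> cases b <;> cases c <;> rfl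
lemma xor_aux3 {a b c d : Bool} (h : xor a b = xor c d) : xor b d = xor a c := by
  revert h; cases a <;> cases b <;> cases c <;> cases d <;> decide
lemma xor_aux4 {a b c : Bool} (h : xor a b = c) : a = xor b c := by
  revert h; cases a <;> cases b <;> cases c <;> decide
lemma xor_aux5 (a b c : Bool) : xor (xor a c) (xor b c) = xor a b := by
  cases a <;> cases b <;> cases c <;> rfl
lemma xor_aux6 (a b : Bool) : xor a (xor a b) = b := by
  cases a <;> cases b <;> rfl
lemma xor_aux7 {a b : Bool} (h : xor a b = false) : a = b := by
  revert h; cases a <;> cases b <;> simp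

lemma walkGain_r_of_potential {G : Multigraph α β} {m : β → PM} {ρ : α → Bool}
    (hρ : ∀ e ∈ G.edges, xor (ρ (G.fst e)) (ρ (G.snd e)) = (m e).r)
    {u v : α} {L : List (β × Bool)} (h : IsWalk G u v L) :
    (walkGain m L).r = xor (ρ u) (ρ v) := by
  induction L generalizing u with
  | nil => have h' : u = v := h; subst h'; simp [walkGain, r_one]
  | cons s L ih =>
    obtain ⟨e, d⟩ := s
    obtain ⟨he, hh, ht⟩ := h
    subst hh
    rw [walkGain_cons, r_mul, ih ht, stepGain_r]
    cases d
    · show xor (m e).r (xor (ρ (G.fst e)) (ρ v)) = xor (ρ (G.snd e)) (ρ v)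
      rw [← hρ e he, xor_aux2]
    · show xor (m e).r (xor (ρ (G.snd e)) (ρ v)) = xor (ρ (G.fst e)) (ρ v)
      rw [← hρ e he, xor_aux1]

lemma exists_potential {G : Multigraph α β} {m : β → PM} (hpp : PurelyPeriodic G m) :
    ∃ ρ : α → Bool, ∀ e ∈ G.edges, xor (ρ (G.fst e)) (ρ (G.snd e)) = (m e).r := by
  classical
  let R : α → α → Prop := fun u v => ∃ L, IsWalk G u v L
  have hrefl : ∀ u, R u u := fun u => ⟨[], rfl⟩
  have hsymm : ∀ {u v}, R u v → R v u := fun h => ⟨_, isWalk_reverse h.choose_spec⟩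
  have htrans : ∀ {u v w}, R u v → R v w → R u w :=
    fun h1 h2 => ⟨_, isWalk_append h1.choose_spec h2.choose_spec⟩
  let s : Setoid α := ⟨R, hrefl, @hsymm, @htrans⟩
  have hwd : ∀ u v L1 L2, IsWalk G u v L1 → IsWalk G u v L2 →
      (walkGain m L1).r = (walkGain m L2).r := by
    intro u v L1 L2 h1 h2
    have hc : IsWalk G u u (L1 ++ L2.reverse.map flipStep) :=
      isWalk_append h1 (isWalk_reverse h2)
    have hx := hpp u _ hc
    rw [walkGain_append] at hx
    have hx' : xor (walkGain m L1).r (walkGain m (L2.reverse.map flipStep)).r = false := by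
      rw [← r_mul, hx]
    rw [walkGain_r_reverse] at hx'
    exact xor_aux7 hx' 
  let rep : α → α := fun v => (Quotient.mk s v).out
  have hrep : ∀ v, R (rep v) v := fun v => Quotient.exact (s := s) (Quotient.out_eq _)
  have hrepeq : ∀ u v, R u v → rep u = rep v := by
    intro u v h
    show Quotient.out _ = Quotient.out _
    congr 1
    exact Quotient.sound h
  refine ⟨fun v => (walkGain m (hrep v).choose).r, fun e he => ?_⟩
  have hedge : IsWalk G (G.fst e) (G.snd e) [(e, true)] := ⟨he, rfl, rfl⟩
  have hre : rep (G.fst e) = rep (G.snd e) := hrepeq _ _ ⟨_, hedge⟩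
  have hwalk1 : IsWalk G (rep (G.snd e)) (G.snd e)
      ((hrep (G.fst e)).choose ++ [(e, true)]) := by
    rw [← hre]
    exact isWalk_append (hrep (G.fst e)).choose_spec hedge
  have hkey := hwd _ _ _ _ hwalk1 (hrep (G.snd e)).choose_spec
  rw [walkGain_append, r_mul] at hkey
  have h1 : (walkGain m [(e, true)]).r = (m e).r := by simp [walkGain]
  rw [h1] at hkey
  show xor (walkGain m (hrep (G.fst e)).choose).r
      (walkGain m (hrep (G.snd e)).choose).r = (m e).r
  rw [← hkey, xor_aux6]

end WalkAux

/-- If two purely periodic subgraphs of a `ℤ²⋊𝒞ₛ`-gain graph have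
connected (nonempty) intersection, then their union is purely periodic. -/
theorem purelyPeriodic_union {α β : Type} [DecidableEq α] [DecidableEq β]
    (G : Multigraph α β) (m : β → PM) (hGm : IsGainGraph G m)
    (A B : Multigraph α β) (hA : IsSubgraph A G) (hB : IsSubgraph B G)
    (hppA : PurelyPeriodic A m) (hppB : PurelyPeriodic B m)
    (hinter : ∃ C : Multigraph α β, IsSubgraph C G ∧
      C.verts = A.verts ∩ B.verts ∧ C.edges = A.edges ∩ B.edges ∧
      C.verts.Nonempty ∧ Connected C) :
    ∀ U : Multigraph α β, IsSubgraph U G →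
      U.verts = A.verts ∪ B.verts → U.edges = A.edges ∪ B.edges →
      PurelyPeriodic U m := by
  intro U hU hUV hUE
  obtain ⟨C, hC, hCV, hCE, ⟨u₀, hu₀⟩, hconn⟩ := hinter
  obtain ⟨ρA, hρA⟩ := exists_potential hppA
  obtain ⟨ρB, hρB⟩ := exists_potential hppB
  -- the two potentials differ by a constant on the (connected) intersection
  have hconst : ∀ v ∈ C.verts, xor (ρA v) (ρB v) = xor (ρA u₀) (ρB u₀) := by
    intro v hv
    obtain ⟨L, hL⟩ := hconn u₀ hu₀ v hv
    have hCA : ∀ e ∈ C.edges, xor (ρA (C.fst e)) (ρA (C.snd e)) = (m e).r := by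
      intro e he
      have heA : e ∈ A.edges := (Finset.mem_inter.1 (hCE ▸ he)).1
      have h1 := hC.2.2 e he
      have h2 := hA.2.2 e heA
      rw [h1.1, h1.2, ← h2.1, ← h2.2]
      exact hρA e heA
    have hCB : ∀ e ∈ C.edges, xor (ρB (C.fst e)) (ρB (C.snd e)) = (m e).r := by
      intro e he
      have heB : e ∈ B.edges := (Finset.mem_inter.1 (hCE ▸ he)).2
      have h1 := hC.2.2 e he
      have h2 := hB.2.2 e heB
      rw [h1.1, h1.2, ← h2.1, ← h2.2]
      exact hρB e heB
    have e1 := walkGain_r_of_potential hCA hL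
    have e2 := walkGain_r_of_potential hCB hL
    rw [e1] at e2
    exact xor_aux3 e2
  classical
  obtain ⟨c, hc⟩ : ∃ c : Bool, c = xor (ρA u₀) (ρB u₀) := ⟨_, rfl⟩
  obtain ⟨ρ, hρdef⟩ : ∃ ρ : α → Bool,
      ∀ v, ρ v = if v ∈ A.verts then ρA v else xor (ρB v) c := ⟨_, fun _ => rfl⟩
  -- ρ agrees with the shifted ρB on all of B.verts
  have hρB' : ∀ v ∈ B.verts, ρ v = xor (ρB v) c := by
    intro v hv
    by_cases hvA : v ∈ A.verts
    · have hvC : v ∈ C.verts := hCV ▸ Finset.mem_inter.2 ⟨hvA, hv⟩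
      have hcv : xor (ρA v) (ρB v) = c := by rw [hconst v hvC, hc]
      rw [hρdef v, if_pos hvA]
      exact xor_aux4 hcv
    · rw [hρdef v, if_neg hvA]
  have hρU : ∀ e ∈ U.edges, xor (ρ (U.fst e)) (ρ (U.snd e)) = (m e).r := by
    intro e he
    have he' : e ∈ A.edges ∪ B.edges := hUE ▸ he
    have hUG := hU.2.2 e he
    rcases Finset.mem_union.1 he' with heA | heB
    · have h2 := hA.2.2 e heA
      have hf : U.fst e = A.fst e := by rw [hUG.1, h2.1]
      have hs : U.snd e = A.snd e := by rw [hUG.2, h2.2]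
      rw [hf, hs, hρdef _, hρdef _,
        if_pos (A.fst_mem e heA), if_pos (A.snd_mem e heA)]
      exact hρA e heA
    · have h2 := hB.2.2 e heB
      have hf : U.fst e = B.fst e := by rw [hUG.1, h2.1]
      have hs : U.snd e = B.snd e := by rw [hUG.2, h2.2]
      rw [hf, hs, hρB' _ (B.fst_mem e heB), hρB' _ (B.snd_mem e heB)]
      rw [← hρB e heB]
      exact xor_aux5 _ _ _
  intro u L hL
  rw [walkGain_r_of_potential hρU hL, Bool.xor_self]

end Crystal
end
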